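/- arXiv:1905.01811 — 5 statements merged into one kernel-verified Lean document; each statement's English description precedes it below -/
import Mathlib

section
/- Let P ⊂ ℝ^m be a set, let 𝒜 : ℝ^m → Matrix (Fin n) (Fin n) ℝ be continuous, let M : ℝ^m → Matrix (Fin n) (Fin n) ℝ be continuously differentiable with M(σ) symmetric and a₁·I ⪯ M(σ) ⪯ a₂·I for all σ ∈ P, where 0 < a₁ ≤ a₂, and let λ > 0. Suppose that for all σ ∈ P and all ρ ∈ ℝ^m with |ρᵢ| ≤ p̄ᵢ for each i, the matrix M(σ)𝒜(σ) + 𝒜(σ)ᵀM(σ) + 2λM(σ) + Σᵢ ρᵢ·(∂M/∂σᵢ)(σ) is negative semidefinite. Then for every continuously differentiable scheduling signal σ : [0,∞) → ℝ^m with σ(t) ∈ P and |σ̇ᵢ(t)| ≤ p̄ᵢ for all t and i, and every solution x : [0,∞) → ℝ^n of ẋ(t) = 𝒜(σ(t))x(t), one has |x(t)| ≤ √(a₂/a₁)·e^{−λt}·|x(0)| for all t ≥ 0. -/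
open Matrix Set

/-- Partial derivative of a matrix-valued function `M` with respect to the `i`-th
coordinate of its argument, taken entrywise. -/
noncomputable def matPartial {m n : ℕ} (M : (Fin m → ℝ) → Matrix (Fin n) (Fin n) ℝ)
    (i : Fin m) (σ : Fin m → ℝ) : Matrix (Fin n) (Fin n) ℝ :=
  Matrix.of fun j k => fderiv ℝ (fun σ' => M σ' j k) σ (Pi.single i 1)

/-- **Theorem 1 (LPV stability).** If a continuously differentiable parameter-dependent
Lyapunov matrix `M(σ)`, symmetric and uniformly bounded by `a₁ I ⪯ M(σ) ⪯ a₂ I` on `P`,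
satisfies the parameter-dependent LMI
`M(σ)𝒜(σ) + 𝒜(σ)ᵀM(σ) + 2λM(σ) + ∑ᵢ ρᵢ ∂M/∂σᵢ(σ) ⪯ 0`
for all `σ ∈ P` and all rates `|ρᵢ| ≤ p̄ᵢ`, then every solution of `ẋ = 𝒜(σ(t))x`
along an admissible scheduling signal decays as
`|x(t)| ≤ √(a₂/a₁) e^{-λt} |x(0)|`. -/
theorem lpv_exponential_stability (n m : ℕ)
    (P : Set (Fin m → ℝ))
    (𝒜 : (Fin m → ℝ) → Matrix (Fin n) (Fin n) ℝ)
    (h𝒜 : Continuous 𝒜)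
    (M : (Fin m → ℝ) → Matrix (Fin n) (Fin n) ℝ)
    (hMC1 : ∀ j k, ContDiff ℝ 1 fun σ => M σ j k)
    (a₁ a₂ lam : ℝ) (ha₁ : 0 < a₁) (ha₁₂ : a₁ ≤ a₂) (hlam : 0 < lam)
    (pbar : Fin m → ℝ)
    (hMsym : ∀ σ ∈ P, (M σ).IsSymm)
    (hMlow : ∀ σ ∈ P, (M σ - a₁ • (1 : Matrix (Fin n) (Fin n) ℝ)).PosSemidef)
    (hMhigh : ∀ σ ∈ P, (a₂ • (1 : Matrix (Fin n) (Fin n) ℝ) - M σ).PosSemidef)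
    (hLMI : ∀ σ ∈ P, ∀ ρ : Fin m → ℝ, (∀ i, |ρ i| ≤ pbar i) →
      (-(M σ * 𝒜 σ + (𝒜 σ)ᵀ * M σ + (2 * lam) • M σ +
          ∑ i, ρ i • matPartial M i σ)).PosSemidef) :
    ∀ σs : ℝ → (Fin m → ℝ),
      ContDiffOn ℝ 1 σs (Ici 0) →
      (∀ t ∈ Ici (0 : ℝ), σs t ∈ P) →
      (∀ t ∈ Ici (0 : ℝ), ∀ i, |derivWithin (fun τ => σs τ i) (Ici 0) t| ≤ pbar i) →
      ∀ x : ℝ → (Fin n → ℝ),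
        (∀ t ∈ Ici (0 : ℝ), HasDerivWithinAt x (𝒜 (σs t) *ᵥ x t) (Ici 0) t) →
        ∀ t ∈ Ici (0 : ℝ),
          Real.sqrt (x t ⬝ᵥ x t) ≤
            Real.sqrt (a₂ / a₁) * Real.exp (-lam * t) * Real.sqrt (x 0 ⬝ᵥ x 0) := by
  intro σs hσC1 hσP hrate x hx t ht
  have huD : UniqueDiffOn ℝ (Ici (0:ℝ)) := uniqueDiffOn_Ici 0
  set ρ : ℝ → Fin m → ℝ := fun τ i => derivWithin (fun τ' => σs τ' i) (Ici 0) τ with hρdef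
  have hσd : ∀ τ ∈ Ici (0:ℝ), HasDerivWithinAt σs (derivWithin σs (Ici 0) τ) (Ici 0) τ :=
    fun τ hτ => ((hσC1.differentiableOn one_ne_zero) τ hτ).hasDerivWithinAt
  have hρeq : ∀ τ ∈ Ici (0:ℝ), ∀ i, ρ τ i = derivWithin σs (Ici 0) τ i := by
    intro τ hτ i
    have h1 : HasDerivWithinAt (fun τ' => σs τ' i) (derivWithin σs (Ici 0) τ i) (Ici 0) τ := by
      have := (ContinuousLinearMap.proj (R := ℝ) (φ := fun _ : Fin m => ℝ)
        i).hasFDerivAt.comp_hasDerivWithinAt τ (hσd τ hτ)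
      simpa [Function.comp_def] using this
    exact h1.derivWithin (huD τ hτ)
  have hxc : ∀ τ ∈ Ici (0:ℝ), ∀ j, HasDerivWithinAt (fun τ' => x τ' j)
      ((𝒜 (σs τ) *ᵥ x τ) j) (Ici 0) τ := by
    intro τ hτ j
    have := (ContinuousLinearMap.proj (R := ℝ) (φ := fun _ : Fin n => ℝ)
      j).hasFDerivAt.comp_hasDerivWithinAt τ (hx τ hτ)
    simpa [Function.comp_def] using this
  have hMd : ∀ τ ∈ Ici (0:ℝ), ∀ j k, HasDerivWithinAt (fun τ' => M (σs τ') j k)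
      (∑ i, ρ τ i * matPartial M i (σs τ) j k) (Ici 0) τ := by
    intro τ hτ j k
    have hfd : HasFDerivAt (fun σ' => M σ' j k)
        (fderiv ℝ (fun σ' => M σ' j k) (σs τ)) (σs τ) :=
      (((hMC1 j k).differentiable one_ne_zero) (σs τ)).hasFDerivAt
    have h1 := hfd.comp_hasDerivWithinAt τ (hσd τ hτ)
    have hv : derivWithin σs (Ici 0) τ
        = ∑ i, (derivWithin σs (Ici 0) τ i) • (Pi.single i 1 : Fin m → ℝ) := by
      funext j'
      simp [Finset.sum_apply, Pi.single_apply, smul_eq_mul]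
    have h2 : fderiv ℝ (fun σ' => M σ' j k) (σs τ) (derivWithin σs (Ici 0) τ)
        = ∑ i, ρ τ i * matPartial M i (σs τ) j k := by
      rw [hv, map_sum]
      refine Finset.sum_congr rfl fun i _ => ?_
      rw [ContinuousLinearMap.map_smul]
      simp [matPartial, hρeq τ hτ i, smul_eq_mul]
    rw [h2] at h1
    simpa [Function.comp_def] using h1
  set V : ℝ → ℝ := fun τ => x τ ⬝ᵥ (M (σs τ) *ᵥ x τ) with hVdef
  set V' : ℝ → ℝ := fun τ => (𝒜 (σs τ) *ᵥ x τ) ⬝ᵥ (M (σs τ) *ᵥ x τ)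
      + x τ ⬝ᵥ ((∑ i, ρ τ i • matPartial M i (σs τ)) *ᵥ x τ)
      + x τ ⬝ᵥ (M (σs τ) *ᵥ (𝒜 (σs τ) *ᵥ x τ)) with hV'def
  have hVd : ∀ τ ∈ Ici (0:ℝ), HasDerivWithinAt V (V' τ) (Ici 0) τ := by
    intro τ hτ
    have hsum : HasDerivWithinAt (fun τ' => ∑ j, ∑ k, x τ' j * (M (σs τ') j k * x τ' k))
        (∑ j, ∑ k, ((𝒜 (σs τ) *ᵥ x τ) j * (M (σs τ) j k * x τ k)
          + x τ j * ((∑ i, ρ τ i * matPartial M i (σs τ) j k) * x τ k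
            + M (σs τ) j k * ((𝒜 (σs τ) *ᵥ x τ) k)))) (Ici 0) τ := by
      refine HasDerivWithinAt.fun_sum fun j _ => HasDerivWithinAt.fun_sum fun k _ => ?_
      exact (hxc τ hτ j).mul ((hMd τ hτ j k).mul (hxc τ hτ k))
    have hfun : V = fun τ' => ∑ j, ∑ k, x τ' j * (M (σs τ') j k * x τ' k) := by
      funext τ'
      simp [hVdef, dotProduct, mulVec, Finset.mul_sum]
    have hval : V' τ = ∑ j, ∑ k, ((𝒜 (σs τ) *ᵥ x τ) j * (M (σs τ) j k * x τ k)
          + x τ j * ((∑ i, ρ τ i * matPartial M i (σs τ) j k) * x τ k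
            + M (σs τ) j k * ((𝒜 (σs τ) *ᵥ x τ) k))) := by
      simp only [hV'def, dotProduct, mulVec, Matrix.sum_apply, Matrix.smul_apply,
        smul_eq_mul, Finset.mul_sum, ← Finset.sum_add_distrib]
      refine Finset.sum_congr rfl fun j _ => ?_
      refine Finset.sum_congr rfl fun k _ => ?_
      rw [mul_add, Finset.mul_sum]
      ring
    rw [hfun, hval]
    exact hsum
  have hV'le : ∀ τ ∈ Ici (0:ℝ), V' τ ≤ -(2*lam) * V τ := by
    intro τ hτ
    have hps := (hLMI (σs τ) (hσP τ hτ) (ρ τ) (fun i => hrate τ hτ i)).dotProduct_mulVec_nonneg (x τ)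
    rw [star_trivial, Matrix.neg_mulVec, dotProduct_neg] at hps
    have hle : x τ ⬝ᵥ ((M (σs τ) * 𝒜 (σs τ) + (𝒜 (σs τ))ᵀ * M (σs τ)
        + (2*lam) • M (σs τ) + ∑ i, ρ τ i • matPartial M i (σs τ)) *ᵥ x τ) ≤ 0 := by
      linarith
    have e1 : x τ ⬝ᵥ ((M (σs τ) * 𝒜 (σs τ)) *ᵥ x τ)
        = x τ ⬝ᵥ (M (σs τ) *ᵥ (𝒜 (σs τ) *ᵥ x τ)) := by
      rw [Matrix.mulVec_mulVec]
    have e2 : x τ ⬝ᵥ (((𝒜 (σs τ))ᵀ * M (σs τ)) *ᵥ x τ)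
        = (𝒜 (σs τ) *ᵥ x τ) ⬝ᵥ (M (σs τ) *ᵥ x τ) := by
      rw [← Matrix.mulVec_mulVec, Matrix.dotProduct_mulVec, Matrix.vecMul_transpose]
    simp only [Matrix.add_mulVec, dotProduct_add, Matrix.smul_mulVec,
      dotProduct_smul, smul_eq_mul] at hle
    rw [e1, e2] at hle
    simp only [hV'def, hVdef]
    linarith
  have hVcont : ContinuousOn V (Ici 0) := fun τ hτ => (hVd τ hτ).continuousWithinAt
  set g : ℝ → ℝ := fun τ => Real.exp (2*lam*τ) * V τ with hgdef
  have hgd : ∀ τ ∈ Ici (0:ℝ), HasDerivWithinAt g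
      (Real.exp (2*lam*τ) * (2*lam) * V τ + Real.exp (2*lam*τ) * V' τ) (Ici 0) τ := by
    intro τ hτ
    have h0 : HasDerivAt (fun τ' : ℝ => 2*lam*τ') (2*lam) τ := by
      simpa using (hasDerivAt_id τ).const_mul (2*lam)
    have he : HasDerivAt (fun τ' => Real.exp (2*lam*τ')) (Real.exp (2*lam*τ) * (2*lam)) τ :=
      h0.exp
    exact he.hasDerivWithinAt.mul (hVd τ hτ)
  have hganti : AntitoneOn g (Ici 0) := by
    refine antitoneOn_of_deriv_nonpos (convex_Ici 0)
      (fun τ hτ => ((Real.continuous_exp.comp (continuous_const.mul continuous_id)).continuousOn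
        τ hτ).mul (hVcont τ hτ)) ?_ ?_
    · rw [interior_Ici]
      intro τ hτ
      exact (((hgd τ (mem_Ici.mpr (le_of_lt (mem_Ioi.mp hτ)))).hasDerivAt (Ici_mem_nhds hτ)).differentiableAt).differentiableWithinAt
    · rw [interior_Ici]
      intro τ hτ
      have hd := (hgd τ (mem_Ici.mpr (le_of_lt (mem_Ioi.mp hτ)))).hasDerivAt (Ici_mem_nhds hτ)
      rw [hd.deriv]
      have h1 := hV'le τ (mem_Ici.mpr (le_of_lt (mem_Ioi.mp hτ)))
      have h2 := (Real.exp_pos (2*lam*τ)).le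
      nlinarith [mul_le_mul_of_nonneg_left h1 h2]
  have hg0 : g t ≤ g 0 := hganti (self_mem_Ici) ht ht
  have hVt : Real.exp (2*lam*t) * V t ≤ V 0 := by
    simpa [hgdef] using hg0
  have hlow : a₁ * (x t ⬝ᵥ x t) ≤ V t := by
    have h := (hMlow (σs t) (hσP t ht)).dotProduct_mulVec_nonneg (x t)
    rw [star_trivial] at h
    simp only [Matrix.sub_mulVec, Matrix.smul_mulVec, Matrix.one_mulVec,
      dotProduct_sub, dotProduct_smul, smul_eq_mul] at h
    simp only [hVdef]
    linarith
  have hhigh : V 0 ≤ a₂ * (x 0 ⬝ᵥ x 0) := by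
    have h := (hMhigh (σs 0) (hσP 0 self_mem_Ici)).dotProduct_mulVec_nonneg (x 0)
    rw [star_trivial] at h
    simp only [Matrix.sub_mulVec, Matrix.smul_mulVec, Matrix.one_mulVec,
      dotProduct_sub, dotProduct_smul, smul_eq_mul] at h
    simp only [hVdef]
    linarith
  have hE : Real.exp (2*lam*t) > 0 := Real.exp_pos _
  have hfin : x t ⬝ᵥ x t ≤ (a₂/a₁) * (Real.exp (-lam*t))^2 * (x 0 ⬝ᵥ x 0) := by
    have h1 : a₁ * (x t ⬝ᵥ x t) ≤ a₂ * (x 0 ⬝ᵥ x 0) / Real.exp (2*lam*t) := by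
      rw [le_div_iff₀ hE]
      calc a₁ * (x t ⬝ᵥ x t) * Real.exp (2*lam*t)
          = Real.exp (2*lam*t) * (a₁ * (x t ⬝ᵥ x t)) := by ring
        _ ≤ Real.exp (2*lam*t) * V t := by
            exact mul_le_mul_of_nonneg_left hlow hE.le
        _ ≤ V 0 := hVt
        _ ≤ a₂ * (x 0 ⬝ᵥ x 0) := hhigh
    have hsq : (Real.exp (-lam*t))^2 = 1 / Real.exp (2*lam*t) := by
      rw [sq, ← Real.exp_add, eq_div_iff hE.ne', ← Real.exp_add]
      simpa using congrArg Real.exp (by ring : -lam*t + -lam*t + 2*lam*t = 0)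
    rw [hsq]
    rw [← sub_nonneg] at h1 ⊢
    have : (a₂/a₁) * (1 / Real.exp (2*lam*t)) * (x 0 ⬝ᵥ x 0) - (x t ⬝ᵥ x t)
        = (a₂ * (x 0 ⬝ᵥ x 0) / Real.exp (2*lam*t) - a₁ * (x t ⬝ᵥ x t)) / a₁ := by
      field_simp
    rw [this]
    exact div_nonneg (by linarith) ha₁.le
  have hstep := Real.sqrt_le_sqrt hfin
  calc Real.sqrt (x t ⬝ᵥ x t)
      ≤ Real.sqrt ((a₂/a₁) * (Real.exp (-lam*t))^2 * (x 0 ⬝ᵥ x 0)) := hstep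
    _ = Real.sqrt (a₂/a₁) * Real.exp (-lam*t) * Real.sqrt (x 0 ⬝ᵥ x 0) := by
        have ha₂ : (0:ℝ) < a₂ := lt_of_lt_of_le ha₁ ha₁₂
        rw [Real.sqrt_mul (mul_nonneg (div_nonneg ha₂.le ha₁.le) (sq_nonneg _)),
          Real.sqrt_mul (div_nonneg ha₂.le ha₁.le),
          Real.sqrt_sq (Real.exp_pos _).le]
end

section
/- Let F : ℝ^n → ℝ^n be continuously differentiable, M : ℝ^n → Matrix (Fin n) (Fin n) ℝ continuously differentiable with M(x) symmetric positive definite for each x, and λ > 0. Suppose for all x ∈ ℝ^n the matrix M(x)·DF(x) + DF(x)ᵀ·M(x) + Σᵢ Fᵢ(x)·(∂M/∂xᵢ)(x) + 2λM(x) is negative semidefinite, where DF(x) is the Jacobian of F at x. Then for every solution pair (x, δ) : [0,∞) → ℝ^n × ℝ^n of the joint system ẋ(t) = F(x(t)), δ̇(t) = DF(x(t))δ(t), the function V(t) = δ(t)ᵀM(x(t))δ(t) satisfies V'(t) ≤ −2λV(t) for all t, and consequently δ(t)ᵀM(x(t))δ(t) ≤ e^{−2λt}·δ(0)ᵀM(x(0))δ(0)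 for all t ≥ 0. -/
open Matrix Set

/-- Jacobian matrix of a vector field `F : ℝⁿ → ℝⁿ` at `x`. -/
noncomputable def jacobian {n : ℕ} (F : (Fin n → ℝ) → (Fin n → ℝ)) (x : Fin n → ℝ) :
    Matrix (Fin n) (Fin n) ℝ :=
  Matrix.of fun i j => fderiv ℝ (fun y => F y i) x (Pi.single j 1)

/-- **Contraction metric gives differential Lyapunov decrease.** If
`M(x)DF(x) + DF(x)ᵀM(x) + ∑ᵢ Fᵢ(x) ∂M/∂xᵢ(x) + 2λM(x) ⪯ 0` for all `x`, then along any
joint solution of `ẋ = F(x)`, `δ̇ = DF(x)δ`, the differential Lyapunov function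
`V(t) = δ(t)ᵀM(x(t))δ(t)` satisfies `V' ≤ -2λV`, hence `V(t) ≤ e^{-2λt}V(0)`. -/
theorem contraction_metric_differential_decay {n : ℕ}
    (F : (Fin n → ℝ) → (Fin n → ℝ)) (hF : ContDiff ℝ 1 F)
    (M : (Fin n → ℝ) → Matrix (Fin n) (Fin n) ℝ)
    (hMC1 : ∀ j k, ContDiff ℝ 1 fun x => M x j k)
    (hMpos : ∀ x, (M x).PosDef)
    (lam : ℝ) (hlam : 0 < lam)
    (hLMI : ∀ x : Fin n → ℝ,
      (-(M x * jacobian F x + (jacobian F x)ᵀ * M x +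
          (∑ i, F x i • matPartial M i x) + (2 * lam) • M x)).PosSemidef) :
    ∀ (x δ : ℝ → (Fin n → ℝ)),
      (∀ t ∈ Ici (0 : ℝ), HasDerivWithinAt x (F (x t)) (Ici 0) t) →
      (∀ t ∈ Ici (0 : ℝ), HasDerivWithinAt δ (jacobian F (x t) *ᵥ δ t) (Ici 0) t) →
      (∀ t ∈ Ici (0 : ℝ),
        derivWithin (fun τ => δ τ ⬝ᵥ (M (x τ) *ᵥ δ τ)) (Ici 0) t ≤
          -(2 * lam) * (δ t ⬝ᵥ (M (x t) *ᵥ δ t))) ∧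
      (∀ t ∈ Ici (0 : ℝ),
        δ t ⬝ᵥ (M (x t) *ᵥ δ t) ≤
          Real.exp (-(2 * lam) * t) * (δ 0 ⬝ᵥ (M (x 0) *ᵥ δ 0))) := by
  intro x δ hx hδ
  set A : ℝ → Matrix (Fin n) (Fin n) ℝ := fun t => jacobian F (x t) with hA
  set V : ℝ → ℝ := fun τ => δ τ ⬝ᵥ (M (x τ) *ᵥ δ τ) with hV
  set S : (Fin n → ℝ) → Matrix (Fin n) (Fin n) ℝ :=
    fun y => (jacobian F y)ᵀ * M y + (∑ i, F y i • matPartial M i y) + M y * jacobian F y with hS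
  -- key derivative
  have key : ∀ t ∈ Ici (0:ℝ), HasDerivWithinAt V (δ t ⬝ᵥ (S (x t) *ᵥ δ t)) (Ici 0) t := by
    intro t ht
    have hδ' : ∀ j, HasDerivWithinAt (fun τ => δ τ j) ((A t *ᵥ δ t) j) (Ici 0) t := by
      intro j
      exact (ContinuousLinearMap.hasFDerivAt (ContinuousLinearMap.proj j)).comp_hasDerivWithinAt t
        (hδ t ht)
    have hMd : ∀ j k, HasDerivWithinAt (fun τ => M (x τ) j k)
        (fderiv ℝ (fun σ => M σ j k) (x t) (F (x t))) (Ici 0) t := by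
      intro j k
      exact (((hMC1 j k).differentiable one_ne_zero) (x t)).hasFDerivAt.comp_hasDerivWithinAt t (hx t ht)
    -- M' = ∑ i, F i • ∂M/∂xᵢ
    have hM'eq : ∀ j k, fderiv ℝ (fun σ => M σ j k) (x t) (F (x t))
        = (∑ i, F (x t) i • matPartial M i (x t)) j k := by
      intro j k
      have hv : F (x t) = ∑ i, F (x t) i • (Pi.single i 1 : Fin n → ℝ) := by
        funext j
        simp [Finset.sum_apply, Pi.single_apply]
      conv_lhs => rw [hv]
      rw [map_sum]
      simp [matPartial, Matrix.sum_apply, _root_.map_smul]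
    -- double-sum form of V
    have hVsum : ∀ τ, V τ = ∑ j, ∑ k, δ τ j * (M (x τ) j k * δ τ k) := by
      intro τ
      simp [hV, dotProduct, Matrix.mulVec, Finset.mul_sum]
    have h1 : HasDerivWithinAt (fun τ => ∑ j, ∑ k, δ τ j * (M (x τ) j k * δ τ k))
        (∑ j, ∑ k, ((A t *ᵥ δ t) j * (M (x t) j k * δ t k)
          + δ t j * (fderiv ℝ (fun σ => M σ j k) (x t) (F (x t)) * δ t k
            + M (x t) j k * ((A t *ᵥ δ t) k)))) (Ici 0) t := by
      refine HasDerivWithinAt.fun_sum fun j _ => HasDerivWithinAt.fun_sum fun k _ => ?_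
      exact (hδ' j).mul ((hMd j k).mul (hδ' k))
    have hDeq : (∑ j, ∑ k, ((A t *ᵥ δ t) j * (M (x t) j k * δ t k)
          + δ t j * (fderiv ℝ (fun σ => M σ j k) (x t) (F (x t)) * δ t k
            + M (x t) j k * ((A t *ᵥ δ t) k))))
        = δ t ⬝ᵥ (S (x t) *ᵥ δ t) := by
      have step : (∑ j, ∑ k, ((A t *ᵥ δ t) j * (M (x t) j k * δ t k)
          + δ t j * (fderiv ℝ (fun σ => M σ j k) (x t) (F (x t)) * δ t k
            + M (x t) j k * ((A t *ᵥ δ t) k))))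
          = (A t *ᵥ δ t) ⬝ᵥ (M (x t) *ᵥ δ t)
            + δ t ⬝ᵥ ((∑ i, F (x t) i • matPartial M i (x t)) *ᵥ δ t)
            + δ t ⬝ᵥ (M (x t) *ᵥ (A t *ᵥ δ t)) := by
        simp only [dotProduct, Matrix.mulVec, Finset.mul_sum, ← Finset.sum_add_distrib]
        refine Finset.sum_congr rfl fun j _ => Finset.sum_congr rfl fun k _ => ?_
        rw [← hM'eq j k, mul_add, Finset.mul_sum]
        ring
      rw [step]
      have e1 : (A t *ᵥ δ t) ⬝ᵥ (M (x t) *ᵥ δ t) = δ t ⬝ᵥ (((A t)ᵀ * M (x t)) *ᵥ δ t) := by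
        rw [← Matrix.vecMul_transpose, ← Matrix.dotProduct_mulVec, Matrix.mulVec_mulVec]
      have e2 : δ t ⬝ᵥ (M (x t) *ᵥ (A t *ᵥ δ t)) = δ t ⬝ᵥ ((M (x t) * A t) *ᵥ δ t) := by
        rw [Matrix.mulVec_mulVec]
      rw [e1, e2, hS]
      simp only [Matrix.add_mulVec, dotProduct_add]
      rfl
    rw [hDeq] at h1
    exact h1.congr (fun τ _ => hVsum τ) (hVsum t)
  -- the LMI bound
  have hbound : ∀ t, δ t ⬝ᵥ (S (x t) *ᵥ δ t) ≤ -(2 * lam) * V t := by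
    intro t
    have h := (hLMI (x t)).dotProduct_mulVec_nonneg (δ t)
    have h' : δ t ⬝ᵥ ((M (x t) * jacobian F (x t) + (jacobian F (x t))ᵀ * M (x t) +
          (∑ i, F (x t) i • matPartial M i (x t)) + (2 * lam) • M (x t)) *ᵥ δ t) ≤ 0 := by
      rw [Matrix.neg_mulVec] at h
      simp only [star_trivial, dotProduct_neg] at h
      linarith
    have expand : δ t ⬝ᵥ ((M (x t) * jacobian F (x t) + (jacobian F (x t))ᵀ * M (x t) +
          (∑ i, F (x t) i • matPartial M i (x t)) + (2 * lam) • M (x t)) *ᵥ δ t)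
        = δ t ⬝ᵥ (S (x t) *ᵥ δ t) + (2 * lam) * V t := by
      rw [hS, hV]
      simp only [Matrix.add_mulVec, dotProduct_add, Matrix.smul_mulVec, dotProduct_smul,
        smul_eq_mul]
      ring
    rw [expand] at h'
    linarith
  have uD := uniqueDiffOn_Ici (0:ℝ)
  constructor
  · intro t ht
    rw [(key t ht).derivWithin (uD t ht)]
    exact hbound t
  · -- Gronwall via exp-weighted function
    intro t ht
    set W : ℝ → ℝ := fun τ => Real.exp ((2 * lam) * τ) * V τ with hW
    have hexp : ∀ τ : ℝ, HasDerivAt (fun s => Real.exp ((2 * lam) * s))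
        (Real.exp ((2 * lam) * τ) * (2 * lam)) τ := by
      intro τ
      have h0 : HasDerivAt (fun s : ℝ => (2 * lam) * s) (2 * lam) τ := by
        simpa using (hasDerivAt_id τ).const_mul (2 * lam)
      exact h0.exp
    have hWd : ∀ τ ∈ Ici (0:ℝ), HasDerivWithinAt W
        (Real.exp ((2 * lam) * τ) * (2 * lam) * V τ
          + Real.exp ((2 * lam) * τ) * (δ τ ⬝ᵥ (S (x τ) *ᵥ δ τ))) (Ici 0) τ :=
      fun τ hτ => ((hexp τ).hasDerivWithinAt).mul (key τ hτ)
    have hWd_nonpos : ∀ τ ∈ Ici (0:ℝ),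
        Real.exp ((2 * lam) * τ) * (2 * lam) * V τ
          + Real.exp ((2 * lam) * τ) * (δ τ ⬝ᵥ (S (x τ) *ᵥ δ τ)) ≤ 0 := by
      intro τ hτ
      have h1 := hbound τ
      have h2 : Real.exp ((2 * lam) * τ) * (δ τ ⬝ᵥ (S (x τ) *ᵥ δ τ))
          ≤ Real.exp ((2 * lam) * τ) * (-(2 * lam) * V τ) :=
        mul_le_mul_of_nonneg_left h1 (Real.exp_pos _).le
      nlinarith [Real.exp_pos ((2 * lam) * τ)]
    have hcont : ContinuousOn W (Ici 0) := fun τ hτ => (hWd τ hτ).continuousWithinAt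
    have hint : interior (Ici (0:ℝ)) = Ioi 0 := interior_Ici
    have hanti : AntitoneOn W (Ici 0) := by
      apply antitoneOn_of_deriv_nonpos (convex_Ici 0) hcont
      · rw [hint]
        intro τ hτ
        exact ((hWd τ (mem_Ici.mpr (le_of_lt (mem_Ioi.mp hτ)))).hasDerivAt (Ici_mem_nhds hτ)).differentiableAt.differentiableWithinAt
      · rw [hint]
        intro τ hτ
        rw [((hWd τ (mem_Ici.mpr (le_of_lt (mem_Ioi.mp hτ)))).hasDerivAt (Ici_mem_nhds hτ)).deriv]
        exact hWd_nonpos τ (mem_Ici.mpr (le_of_lt (mem_Ioi.mp hτ)))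
    have hW0 : W t ≤ W 0 := hanti self_mem_Ici ht ht
    have hW0' : Real.exp ((2 * lam) * t) * V t ≤ V 0 := by
      simpa [hW] using hW0
    have : V t ≤ Real.exp (-(2 * lam) * t) * V 0 := by
      have hpos := Real.exp_pos ((2 * lam) * t)
      rw [show (-(2 * lam) * t) = -((2 * lam) * t) by ring, Real.exp_neg]
      calc V t = (Real.exp ((2 * lam) * t))⁻¹ * (Real.exp ((2 * lam) * t) * V t) := by
            field_simp
        _ ≤ (Real.exp ((2 * lam) * t))⁻¹ * V 0 :=
            mul_le_mul_of_nonneg_left hW0' (inv_nonneg.mpr hpos.le)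
    simpa [hV] using this
end

section
/- Let F : ℝ^n → ℝ^n be continuously differentiable, M : ℝ^n → Matrix (Fin n) (Fin n) ℝ continuously differentiable with M(x) symmetric positive definite, and λ > 0, such that for all x the matrix M(x)·DF(x) + DF(x)ᵀ·M(x) + Σᵢ Fᵢ(x)·(∂M/∂xᵢ)(x) + 2λM(x) is negative semidefinite. Let c : [0,1] × [0,∞) → ℝ^n be C², with ∂c/∂t(s,t) = F(c(s,t)) for all (s,t). Then the path energy E(t) = ∫₀¹ (∂c/∂s)(s,t)ᵀ M(c(s,t)) (∂c/∂s)(s,t) ds satisfies E(t) ≤ e^{−2λt}·E(0) for all t ≥ 0. -/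
open Matrix Set

/-- A continuous linear functional on `ℝⁿ` is determined by its values on basis vectors. -/
lemma clm_apply_eq_sum {n : ℕ} (L : (Fin n → ℝ) →L[ℝ] ℝ) (v : Fin n → ℝ) :
    L v = ∑ i, v i * L (Pi.single i 1) := by
  have hv : v = ∑ i, v i • (Pi.single i (1:ℝ) : Fin n → ℝ) := by
    have h1 : ∑ i, v i • (Pi.single i (1:ℝ) : Fin n → ℝ)
        = ∑ i, (Pi.single i (v i) : Fin n → ℝ) := by
      refine Finset.sum_congr rfl fun i _ => ?_
      rw [← Pi.single_smul, smul_eq_mul, mul_one]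
    rw [h1, Finset.univ_sum_single]
  conv_lhs => rw [hv]
  rw [map_sum]
  exact Finset.sum_congr rfl fun i _ => by rw [L.map_smul, smul_eq_mul]

/-- The jacobian matrix acting on a vector gives the Fréchet derivative. -/
lemma jacobian_mulVec {n : ℕ} {F : (Fin n → ℝ) → (Fin n → ℝ)} (hF : Differentiable ℝ F)
    (x v : Fin n → ℝ) : jacobian F x *ᵥ v = fderiv ℝ F x v := by
  funext i
  have h2 : fderiv ℝ (fun y => F y i) x =
      (ContinuousLinearMap.proj (R := ℝ) (φ := fun _ : Fin n => ℝ) i).comp (fderiv ℝ F x) := by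
    rw [show (fun y => F y i) =
        (ContinuousLinearMap.proj (R := ℝ) (φ := fun _ : Fin n => ℝ) i) ∘ F from rfl]
    rw [fderiv_comp x (ContinuousLinearMap.differentiableAt _) (hF x),
      ContinuousLinearMap.fderiv]
  have h3 : fderiv ℝ F x v i = fderiv ℝ (fun y => F y i) x v := by rw [h2]; rfl
  rw [h3, clm_apply_eq_sum]
  simp only [jacobian, Matrix.mulVec, dotProduct, Matrix.of_apply]
  exact Finset.sum_congr rfl fun j _ => mul_comm _ _

/-- Quadratic form of a matrix whose negation is positive semidefinite is nonpositive. -/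
lemma quad_nonpos {n : ℕ} {X : Matrix (Fin n) (Fin n) ℝ} (h : (-X).PosSemidef)
    (v : Fin n → ℝ) : v ⬝ᵥ (X *ᵥ v) ≤ 0 := by
  have h2 := h.dotProduct_mulVec_nonneg v
  rw [Matrix.neg_mulVec, dotProduct_neg] at h2
  simpa using h2

/-- Grönwall-type comparison: if `f' ≤ -a f` on `[0, ∞)` then `f t ≤ e^{-at} f 0`. -/
lemma gronwall_aux (a : ℝ) (f f' : ℝ → ℝ)
    (hd : ∀ t ∈ Ici (0:ℝ), HasDerivWithinAt f (f' t) (Ici 0) t)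
    (hb : ∀ t ∈ Ici (0:ℝ), f' t ≤ -a * f t) :
    ∀ t ∈ Ici (0:ℝ), f t ≤ Real.exp (-a * t) * f 0 := by
  set ψ : ℝ → ℝ := fun t => Real.exp (a * t) * f t with hψdef
  have hψd : ∀ t ∈ Ici (0:ℝ),
      HasDerivWithinAt ψ (Real.exp (a * t) * (a * 1) * f t + Real.exp (a * t) * f' t)
        (Ici 0) t := by
    intro t ht
    exact (((hasDerivAt_id t).const_mul a).exp.hasDerivWithinAt).mul (hd t ht)
  have anti : AntitoneOn ψ (Ici 0) := by
    apply antitoneOn_of_deriv_nonpos (convex_Ici 0)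
    · exact fun t ht => (hψd t ht).continuousWithinAt
    · intro t ht
      rw [interior_Ici] at ht
      exact ((hψd t (Set.mem_Ici.mpr (le_of_lt ht))).hasDerivAt (Ici_mem_nhds ht)).differentiableAt.differentiableWithinAt
    · intro t ht
      rw [interior_Ici] at ht
      have h := (hψd t (Set.mem_Ici.mpr (le_of_lt ht))).hasDerivAt (Ici_mem_nhds ht)
      rw [h.deriv]
      nlinarith [Real.exp_pos (a * t), hb t (Set.mem_Ici.mpr (le_of_lt ht))]
  intro t ht
  have h1 : ψ t ≤ ψ 0 := anti self_mem_Ici ht ht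
  have h2 : ψ 0 = f 0 := by simp [hψdef]
  have h3 : Real.exp (a * t) * f t ≤ f 0 := by rw [← h2]; exact h1
  have h4 : Real.exp (-a * t) * (Real.exp (a * t) * f t) ≤ Real.exp (-a * t) * f 0 :=
    mul_le_mul_of_nonneg_left h3 (Real.exp_pos _).le
  calc f t = Real.exp (-a * t) * (Real.exp (a * t) * f t) := by
        rw [← mul_assoc, ← Real.exp_add, neg_mul, neg_add_cancel, Real.exp_zero, one_mul]
    _ ≤ Real.exp (-a * t) * f 0 := h4

/-- Continuity of a quadratic form with continuously varying matrix and vector. -/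
lemma quadform_contOn {n : ℕ} {A : Set ℝ} {d : ℝ → (Fin n → ℝ)}
    {m : ℝ → Matrix (Fin n) (Fin n) ℝ}
    (hd : ContinuousOn d A) (hm : ∀ j k, ContinuousOn (fun s => m s j k) A) :
    ContinuousOn (fun s => d s ⬝ᵥ (m s *ᵥ d s)) A := by
  have hdj : ∀ j, ContinuousOn (fun s => d s j) A :=
    fun j => (continuous_apply j).comp_continuousOn hd
  simp only [dotProduct, Matrix.mulVec]
  apply continuousOn_finset_sum
  intro j _
  exact (hdj j).mul (continuousOn_finset_sum _ fun k _ => (hm j k).mul (hdj k))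

/-- **Exponential decay of path energy (inequality (28) of the paper).** If `M` satisfies
the contraction condition with rate `λ` for `ẋ = F(x)` and `c(s,t)` is a `C²` family of
curves each of whose points flows along `F` in `t`, then the Riemannian energy
`E(t) = ∫₀¹ c_sᵀ M(c) c_s ds` of the flowed path satisfies `E(t) ≤ e^{-2λt} E(0)`. -/
theorem flowed_path_energy_decay {n : ℕ}
    (F : (Fin n → ℝ) → (Fin n → ℝ)) (hF : ContDiff ℝ 1 F)
    (M : (Fin n → ℝ) → Matrix (Fin n) (Fin n) ℝ)
    (hMC1 : ∀ j k, ContDiff ℝ 1 fun x => M x j k)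
    (hMpos : ∀ x, (M x).PosDef)
    (lam : ℝ) (hlam : 0 < lam)
    (hLMI : ∀ x : Fin n → ℝ,
      (-(M x * jacobian F x + (jacobian F x)ᵀ * M x +
          (∑ i, F x i • matPartial M i x) + (2 * lam) • M x)).PosSemidef)
    (c : ℝ → ℝ → (Fin n → ℝ))
    (hc : ContDiffOn ℝ 2 (Function.uncurry c) (Icc 0 1 ×ˢ Ici 0))
    (hflow : ∀ s ∈ Icc (0 : ℝ) 1, ∀ t ∈ Ici (0 : ℝ),
      HasDerivWithinAt (fun τ => c s τ) (F (c s t)) (Ici 0) t) :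
    ∀ t ∈ Ici (0 : ℝ),
      (∫ s in (0 : ℝ)..1,
          (derivWithin (fun σ => c σ t) (Icc 0 1) s) ⬝ᵥ
            (M (c s t) *ᵥ derivWithin (fun σ => c σ t) (Icc 0 1) s)) ≤
        Real.exp (-(2 * lam) * t) *
          (∫ s in (0 : ℝ)..1,
            (derivWithin (fun σ => c σ 0) (Icc 0 1) s) ⬝ᵥ
              (M (c s 0) *ᵥ derivWithin (fun σ => c σ 0) (Icc 0 1) s)) := by
  classical
  have h01 : (0:ℝ) < 1 := one_pos
  set S : Set (ℝ × ℝ) := Icc (0:ℝ) 1 ×ˢ Ici (0:ℝ) with hSdef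
  have hSuniq : UniqueDiffOn ℝ S := (uniqueDiffOn_Icc h01).prod (uniqueDiffOn_Ici 0)
  set u : ℝ × ℝ → (Fin n → ℝ) := Function.uncurry c with hudef
  set g : ℝ × ℝ → (ℝ × ℝ) →L[ℝ] (Fin n → ℝ) := fderivWithin ℝ u S with hgdef
  have hgC1 : ContDiffOn ℝ 1 g S := hc.fderivWithin hSuniq (by norm_num)
  have hudiff : ∀ p ∈ S, HasFDerivWithinAt u (g p) S p := fun p hp =>
    ((hc.differentiableOn (by norm_num)) p hp).hasFDerivWithinAt
  -- derivative of the curve in `s` equals `g (s,t) (1,0)`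
  have hcurve : ∀ t' ∈ Ici (0:ℝ), ∀ s' ∈ Icc (0:ℝ) 1,
      HasDerivWithinAt (fun σ => c σ t') (g (s', t') (1, 0)) (Icc 0 1) s' := by
    intro t' ht' s' hs'
    have h1 : HasDerivWithinAt (fun σ : ℝ => (σ, t')) ((1:ℝ), (0:ℝ)) (Icc 0 1) s' :=
      (hasDerivWithinAt_id _ _).prodMk (hasDerivWithinAt_const _ _ _)
    exact (hudiff (s', t') ⟨hs', ht'⟩).comp_hasDerivWithinAt s' h1 (fun σ hσ => (⟨hσ, ht'⟩ : (σ, t') ∈ S))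
  have hδeq : ∀ t' ∈ Ici (0:ℝ), ∀ s' ∈ Icc (0:ℝ) 1,
      derivWithin (fun σ => c σ t') (Icc 0 1) s' = g (s', t') (1, 0) :=
    fun t' ht' s' hs' => (hcurve t' ht' s' hs').derivWithin ((uniqueDiffOn_Icc h01) s' hs')
  -- derivative of `u` in `t` equals `F ∘ u`
  have hgt : ∀ p ∈ S, g p (0, 1) = F (u p) := by
    intro p hp
    obtain ⟨s', t'⟩ := p
    have hs' : s' ∈ Icc (0:ℝ) 1 := hp.1
    have ht' : t' ∈ Ici (0:ℝ) := hp.2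
    have h1 : HasDerivWithinAt (fun τ : ℝ => (s', τ)) ((0:ℝ), (1:ℝ)) (Ici 0) t' :=
      (hasDerivWithinAt_const _ _ _).prodMk (hasDerivWithinAt_id _ _)
    have h2 : HasDerivWithinAt (fun τ => c s' τ) (g (s', t') (0, 1)) (Ici 0) t' :=
      (hudiff (s', t') hp).comp_hasDerivWithinAt t' h1 (fun τ hτ => ⟨hs', hτ⟩)
    have e1 : derivWithin (fun τ => c s' τ) (Ici 0) t' = g (s', t') (0, 1) :=
      h2.derivWithin ((uniqueDiffOn_Ici 0) t' ht')
    have e2 : derivWithin (fun τ => c s' τ) (Ici 0) t' = F (c s' t') :=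
      (hflow s' hs' t' ht').derivWithin ((uniqueDiffOn_Ici 0) t' ht')
    rw [← e1, e2]
    rfl
  have hclos : closure (interior S) = S := by
    rw [hSdef, interior_prod_eq, interior_Icc, interior_Ici, closure_prod_eq,
      closure_Ioo (by norm_num : (0:ℝ) ≠ 1), closure_Ioi]
  -- mixed partial derivatives: the `s`-derivative flows along the linearized dynamics
  have hmix : ∀ s' ∈ Icc (0:ℝ) 1, ∀ t' ∈ Ici (0:ℝ),
      HasDerivWithinAt (fun τ => g (s', τ) (1, 0))
        (jacobian F (c s' t') *ᵥ g (s', t') (1, 0)) (Ici 0) t' := by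
    intro s' hs' t' ht'
    have hp : (s', t') ∈ S := ⟨hs', ht'⟩
    set G := fderivWithin ℝ g S (s', t') with hGdef
    have hgdiffW : DifferentiableWithinAt ℝ g S (s', t') := (hgC1.differentiableOn one_ne_zero) _ hp
    have hgd : HasFDerivWithinAt g G S (s', t') := hgdiffW.hasFDerivWithinAt
    have h1 : HasDerivWithinAt (fun τ : ℝ => (s', τ)) ((0:ℝ), (1:ℝ)) (Ici 0) t' :=
      (hasDerivWithinAt_const _ _ _).prodMk (hasDerivWithinAt_id _ _)
    have h2 : HasDerivWithinAt (fun τ => g (s', τ)) (G (0, 1)) (Ici 0) t' :=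
      hgd.comp_hasDerivWithinAt t' h1 (fun τ hτ => ⟨hs', hτ⟩)
    have h3 : HasDerivWithinAt (fun τ => g (s', τ) ((1:ℝ), (0:ℝ))) (G (0, 1) (1, 0))
        (Ici 0) t' :=
      (ContinuousLinearMap.apply ℝ (Fin n → ℝ) ((1:ℝ), (0:ℝ))).hasFDerivAt.comp_hasDerivWithinAt
        t' h2
    have hsymm : IsSymmSndFDerivWithinAt ℝ u S (s', t') :=
      (hc.contDiffWithinAt hp).isSymmSndFDerivWithinAt (by simp) hSuniq (by rw [hclos]; exact hp) hp
    have hv1 : G (0, 1) (1, 0) = G (1, 0) (0, 1) := hsymm (0, 1) (1, 0)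
    have e1 : fderivWithin ℝ
          ((ContinuousLinearMap.apply ℝ (Fin n → ℝ) ((0:ℝ), (1:ℝ))) ∘ g) S (s', t') =
        (ContinuousLinearMap.apply ℝ (Fin n → ℝ) ((0:ℝ), (1:ℝ))).comp G := by
      rw [fderiv_comp_fderivWithin _ (ContinuousLinearMap.differentiableAt _) hgdiffW
        (hSuniq _ hp), ContinuousLinearMap.fderiv]
    have e2 : fderivWithin ℝ
          ((ContinuousLinearMap.apply ℝ (Fin n → ℝ) ((0:ℝ), (1:ℝ))) ∘ g) S (s', t') =
        fderivWithin ℝ (F ∘ u) S (s', t') := by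
      apply fderivWithin_congr
      · intro q hq
        simpa using hgt q hq
      · simpa using hgt _ hp
    have e3 : fderivWithin ℝ (F ∘ u) S (s', t') =
        (fderiv ℝ F (u (s', t'))).comp (g (s', t')) :=
      fderiv_comp_fderivWithin _ ((hF.differentiable one_ne_zero) _)
        ((hc.differentiableOn (by norm_num)) _ hp) (hSuniq _ hp)
    have hval : G (0, 1) (1, 0) = fderiv ℝ F (c s' t') (g (s', t') (1, 0)) := by
      rw [hv1]
      have hstep : G (1, 0) (0, 1) =
          ((ContinuousLinearMap.apply ℝ (Fin n → ℝ) ((0:ℝ), (1:ℝ))).comp G) (1, 0) := rfl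
      rw [hstep, ← e1, e2, e3]
      rfl
    have hjac : jacobian F (c s' t') *ᵥ g (s', t') (1, 0) =
        fderiv ℝ F (c s' t') (g (s', t') (1, 0)) :=
      jacobian_mulVec (hF.differentiable one_ne_zero) _ _
    rw [hjac, ← hval]
    exact h3
  -- pointwise-in-`s` exponential decay of the energy integrand
  have key : ∀ s' ∈ Icc (0:ℝ) 1, ∀ t' ∈ Ici (0:ℝ),
      (g (s', t') (1, 0)) ⬝ᵥ (M (c s' t') *ᵥ g (s', t') (1, 0)) ≤
        Real.exp (-(2 * lam) * t') *
          ((g (s', 0) (1, 0)) ⬝ᵥ (M (c s' 0) *ᵥ g (s', 0) (1, 0))) := by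
    intro s' hs'
    set δ : ℝ → (Fin n → ℝ) := fun τ => g (s', τ) ((1:ℝ), (0:ℝ)) with hδdef
    set φ : ℝ → ℝ := fun τ => δ τ ⬝ᵥ (M (c s' τ) *ᵥ δ τ) with hφdef
    set D : ℝ → ℝ := fun τ =>
      (jacobian F (c s' τ) *ᵥ δ τ) ⬝ᵥ (M (c s' τ) *ᵥ δ τ)
      + δ τ ⬝ᵥ ((∑ i, F (c s' τ) i • matPartial M i (c s' τ)) *ᵥ δ τ)
      + δ τ ⬝ᵥ (M (c s' τ) *ᵥ (jacobian F (c s' τ) *ᵥ δ τ)) with hDdef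
    have hφd : ∀ τ ∈ Ici (0:ℝ), HasDerivWithinAt φ (D τ) (Ici 0) τ := by
      intro τ hτ
      have hδd : HasDerivWithinAt δ (jacobian F (c s' τ) *ᵥ δ τ) (Ici 0) τ := hmix s' hs' τ hτ
      have hδdj : ∀ j, HasDerivWithinAt (fun τ' => δ τ' j)
          ((jacobian F (c s' τ) *ᵥ δ τ) j) (Ici 0) τ := fun j =>
        (ContinuousLinearMap.proj (R := ℝ) (φ := fun _ : Fin n => ℝ)
          j).hasFDerivAt.comp_hasDerivWithinAt τ hδd
      have hMd : ∀ j k, HasDerivWithinAt (fun τ' => M (c s' τ') j k)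
          (∑ i, F (c s' τ) i * matPartial M i (c s' τ) j k) (Ici 0) τ := by
        intro j k
        have h1 := ((hMC1 j k).differentiable one_ne_zero
          (c s' τ)).hasFDerivAt.comp_hasDerivWithinAt τ (hflow s' hs' τ hτ)
        have e : (∑ i, F (c s' τ) i * matPartial M i (c s' τ) j k) =
            fderiv ℝ (fun x => M x j k) (c s' τ) (F (c s' τ)) := by
          rw [clm_apply_eq_sum]
          simp [matPartial]
        rw [e]
        exact h1
      have hsum : HasDerivWithinAt
          (fun τ' => ∑ j, δ τ' j * ∑ k, M (c s' τ') j k * δ τ' k)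
          (∑ j, ((jacobian F (c s' τ) *ᵥ δ τ) j * (∑ k, M (c s' τ) j k * δ τ k)
            + δ τ j * (∑ k, ((∑ i, F (c s' τ) i * matPartial M i (c s' τ) j k) * δ τ k
                + M (c s' τ) j k * (jacobian F (c s' τ) *ᵥ δ τ) k)))) (Ici 0) τ :=
        HasDerivWithinAt.fun_sum (fun j _ => (hδdj j).mul
          (HasDerivWithinAt.fun_sum (fun k _ => (hMd j k).mul (hδdj k))))
      have hrepr : φ = fun τ' => ∑ j, δ τ' j * ∑ k, M (c s' τ') j k * δ τ' k := by
        funext τ'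
        simp [hφdef, dotProduct, Matrix.mulVec]
      rw [hrepr]
      convert hsum using 1
      simp only [hDdef, dotProduct, Matrix.mulVec, Matrix.sum_apply,
        Matrix.smul_apply, smul_eq_mul, mul_add, Finset.mul_sum, Finset.sum_add_distrib]
      ring
    have hDle : ∀ τ ∈ Ici (0:ℝ), D τ ≤ -(2 * lam) * φ τ := by
      intro τ hτ
      have h0 := quad_nonpos (hLMI (c s' τ)) (δ τ)
      have hexp : δ τ ⬝ᵥ ((M (c s' τ) * jacobian F (c s' τ) +
          (jacobian F (c s' τ))ᵀ * M (c s' τ) +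
          (∑ i, F (c s' τ) i • matPartial M i (c s' τ)) +
          (2 * lam) • M (c s' τ)) *ᵥ δ τ) = D τ + (2 * lam) * φ τ := by
        rw [Matrix.add_mulVec, Matrix.add_mulVec, Matrix.add_mulVec,
          dotProduct_add, dotProduct_add, dotProduct_add,
          Matrix.smul_mulVec, dotProduct_smul, smul_eq_mul,
          ← Matrix.mulVec_mulVec, ← Matrix.mulVec_mulVec,
          Matrix.dotProduct_mulVec (δ τ) ((jacobian F (c s' τ))ᵀ),
          Matrix.vecMul_transpose]
        simp only [hDdef, hφdef]
        ring
      linarith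
    exact gronwall_aux (2 * lam) φ D hφd (by simpa using hDle)
  -- integrate the pointwise bound
  intro t ht
  have hIcc : uIcc (0:ℝ) 1 = Icc 0 1 := uIcc_of_le (by norm_num)
  have hcongr : ∀ t' ∈ Ici (0:ℝ), EqOn
      (fun s => (derivWithin (fun σ => c σ t') (Icc 0 1) s) ⬝ᵥ
        (M (c s t') *ᵥ derivWithin (fun σ => c σ t') (Icc 0 1) s))
      (fun s => (g (s, t') (1, 0)) ⬝ᵥ (M (c s t') *ᵥ g (s, t') (1, 0))) (uIcc 0 1) := by
    intro t' ht' s hs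
    rw [hIcc] at hs
    simp only
    rw [hδeq t' ht' s hs]
  have hucont : ContinuousOn u S := hc.continuousOn
  have hgcont : ContinuousOn g S := hgC1.continuousOn
  have hInt : ∀ t' ∈ Ici (0:ℝ), ContinuousOn
      (fun s => (g (s, t') (1, 0)) ⬝ᵥ (M (c s t') *ᵥ g (s, t') (1, 0))) (Icc 0 1) := by
    intro t' ht'
    have hline : ContinuousOn (fun s : ℝ => (s, t')) (Icc 0 1) :=
      (continuous_id.prodMk continuous_const).continuousOn
    have hmaps : MapsTo (fun s : ℝ => (s, t')) (Icc 0 1) S := fun s hs => ⟨hs, ht'⟩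
    have hd : ContinuousOn (fun s => g (s, t') ((1:ℝ), (0:ℝ))) (Icc 0 1) :=
      ((ContinuousLinearMap.apply ℝ (Fin n → ℝ)
        ((1:ℝ), (0:ℝ))).continuous).comp_continuousOn (hgcont.comp hline hmaps)
    have hm : ∀ j k, ContinuousOn (fun s => M (c s t') j k) (Icc 0 1) :=
      fun j k => (hMC1 j k).continuous.comp_continuousOn (hucont.comp hline hmaps)
    exact quadform_contOn hd hm
  rw [intervalIntegral.integral_congr (hcongr t ht),
    intervalIntegral.integral_congr (hcongr 0 self_mem_Ici)]
  have hint1 : IntervalIntegrable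
      (fun s => (g (s, t) (1, 0)) ⬝ᵥ (M (c s t) *ᵥ g (s, t) (1, 0)))
      MeasureTheory.volume 0 1 := ((hInt t ht).mono (by rw [hIcc])).intervalIntegrable
  have hint2 : IntervalIntegrable
      (fun s => Real.exp (-(2 * lam) * t) *
        ((g (s, 0) (1, 0)) ⬝ᵥ (M (c s 0) *ᵥ g (s, 0) (1, 0))))
      MeasureTheory.volume 0 1 :=
    ((continuousOn_const.mul (hInt 0 self_mem_Ici)).mono (by rw [hIcc])).intervalIntegrable
  calc (∫ s in (0:ℝ)..1, (g (s, t) (1, 0)) ⬝ᵥ (M (c s t) *ᵥ g (s, t) (1, 0)))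
      ≤ ∫ s in (0:ℝ)..1, Real.exp (-(2 * lam) * t) *
          ((g (s, 0) (1, 0)) ⬝ᵥ (M (c s 0) *ᵥ g (s, 0) (1, 0))) :=
        intervalIntegral.integral_mono_on (by norm_num) hint1 hint2
          (fun s hs => key s hs t ht)
    _ = Real.exp (-(2 * lam) * t) *
          ∫ s in (0:ℝ)..1, (g (s, 0) (1, 0)) ⬝ᵥ (M (c s 0) *ᵥ g (s, 0) (1, 0)) :=
        intervalIntegral.integral_const_mul _ _
end

section
/- Let g : ℝ^n → ℝ^m, u_e : ℝ^m → ℝ^p, x_e : ℝ^m → ℝ^n, and K : ℝ^m → Matrix (Fin p) (Fin n) ℝ all be continuously differentiable, and suppose g(x_e(σ)) = σ for all σ ∈ ℝ^m. Define the gain-scheduled control law κ : ℝ^n → ℝ^p by κ(x) = u_e(g(x)) + K(g(x))·(x − x_e(g(x))). Then for every σ ∈ ℝ^m, the Fréchet derivative of κ at the equilibrium point x_e(σ) is Dκ(x_e(σ)) = K(σ) + (Du_e(σ) − K(σ)·Dx_e(σ)) ∘ Dg(x_e(σ)), where Du_e(σ) : ℝ^m → ℝ^p, Dx_e(σ) :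 ℝ^m → ℝ^n, and Dg(x_e(σ)) : ℝ^n → ℝ^m are the respective derivatives. In particular, in general Dκ(x_e(σ)) ≠ K(σ): the realization introduces the additional term (Du_e(σ) − K(σ)Dx_e(σ))Dg(x_e(σ)). -/
open Matrix

noncomputable def mulVecB (n p : ℕ) :
    (Fin p → Fin n → ℝ) →L[ℝ] (Fin n → ℝ) →L[ℝ] (Fin p → ℝ) :=
  LinearMap.toContinuousLinearMap
    { toFun := fun M => LinearMap.toContinuousLinearMap (Matrix.mulVecLin (Matrix.of M))
      map_add' := by
        intro M N
        ext v i
        show (Matrix.of (M + N) *ᵥ v) i = (Matrix.of M *ᵥ v) i + (Matrix.of N *ᵥ v) i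
        rw [show Matrix.of (M + N) = Matrix.of M + Matrix.of N from rfl, Matrix.add_mulVec]
        rfl
      map_smul' := by
        intro c M
        ext v i
        show (Matrix.of (c • M) *ᵥ v) i = c * (Matrix.of M *ᵥ v) i
        rw [show Matrix.of (c • M) = c • Matrix.of M from rfl, Matrix.smul_mulVec]
        rfl }

/-- **Hidden coupling terms in the gain-scheduled realization.** For the gain-scheduled
control law `κ(x) = u_e(g(x)) + K(g(x))(x - x_e(g(x)))` built from a `C¹` equilibrium
family with `g(x_e(σ)) = σ`, the Fréchet derivative at the equilibrium point `x_e(σ)` is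
`Dκ(x_e(σ)) = K(σ) + (Du_e(σ) - K(σ)∘Dx_e(σ)) ∘ Dg(x_e(σ))`: the realization introduces
the hidden coupling term `(Du_e(σ) - K(σ)Dx_e(σ))Dg(x_e(σ))` beyond `K(σ)`. -/
theorem gain_scheduled_hidden_coupling {n m p : ℕ}
    (g : (Fin n → ℝ) → (Fin m → ℝ))
    (ue : (Fin m → ℝ) → (Fin p → ℝ))
    (xe : (Fin m → ℝ) → (Fin n → ℝ))
    (K : (Fin m → ℝ) → Matrix (Fin p) (Fin n) ℝ)
    (hg : ContDiff ℝ 1 g) (hue : ContDiff ℝ 1 ue) (hxe : ContDiff ℝ 1 xe)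
    (hK : ∀ i j, ContDiff ℝ 1 fun σ => K σ i j)
    (hgxe : ∀ σ, g (xe σ) = σ)
    (σ : Fin m → ℝ) :
    fderiv ℝ (fun x => ue (g x) + K (g x) *ᵥ (x - xe (g x))) (xe σ) =
      LinearMap.toContinuousLinearMap (Matrix.mulVecLin (K σ)) +
        ((fderiv ℝ ue σ) -
            (LinearMap.toContinuousLinearMap (Matrix.mulVecLin (K σ))).comp
              (fderiv ℝ xe σ)).comp
          (fderiv ℝ g (xe σ)) := by
  set x₀ := xe σ with hx₀def
  have hgx₀ : g x₀ = σ := hgxe σ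
  set K' : (Fin m → ℝ) → (Fin p → Fin n → ℝ) := fun τ i j => K τ i j with hK'def
  have hDg : HasFDerivAt g (fderiv ℝ g x₀) x₀ :=
    (hg.differentiable one_ne_zero x₀).hasFDerivAt
  have hDue : HasFDerivAt ue (fderiv ℝ ue σ) (g x₀) := by
    rw [hgx₀]; exact (hue.differentiable one_ne_zero σ).hasFDerivAt
  have hDxe : HasFDerivAt xe (fderiv ℝ xe σ) (g x₀) := by
    rw [hgx₀]; exact (hxe.differentiable one_ne_zero σ).hasFDerivAt
  have hKdiff : DifferentiableAt ℝ K' (g x₀) := by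
    rw [differentiableAt_pi]
    intro i
    rw [differentiableAt_pi]
    intro j
    exact ((hK i j).differentiable one_ne_zero _)
  have hKg : HasFDerivAt (fun x => K' (g x)) ((fderiv ℝ K' (g x₀)).comp (fderiv ℝ g x₀)) x₀ :=
    (hKdiff.hasFDerivAt).comp x₀ hDg
  have hv : HasFDerivAt (fun x => x - xe (g x))
      (ContinuousLinearMap.id ℝ _ - (fderiv ℝ xe σ).comp (fderiv ℝ g x₀)) x₀ :=
    (hasFDerivAt_id x₀).sub (hDxe.comp x₀ hDg)
  have hbil := (mulVecB n p).hasFDerivAt_of_bilinear hKg hv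
  have h1 : HasFDerivAt (fun x => ue (g x))
      ((fderiv ℝ ue σ).comp (fderiv ℝ g x₀)) x₀ := hDue.comp x₀ hDg
  have h2 := h1.fun_add hbil
  have hfun : (fun x => ue (g x) + K (g x) *ᵥ (x - xe (g x))) =
      (fun x => ue (g x) + (mulVecB n p) (K' (g x)) (x - xe (g x))) := rfl
  rw [hfun, h2.fderiv]
  have hx0 : x₀ - xe (g x₀) = 0 := by rw [hgx₀]; exact sub_self _
  rw [hx0, hgx₀]
  ext v i
  simp [mulVecB, ContinuousLinearMap.precompR, ContinuousLinearMap.precompL,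
    Matrix.mulVec_sub, hK'def]
  abel
end

section
/- Let c ∈ ℝ, c ≠ 0, let w(t) = w₀ + c·t for some w₀ ∈ ℝ, and let (x₁, x₂) : [0,∞) → ℝ² solve the closed-loop system ẋ₁ = −x₁ − x₂ + w(t), ẋ₂ = x₁ (the plant ẋ₁ = −x₁ − x₂ + w, ẋ₂ = 1 − e^{−x₂} + u under the controller u = x₁ + e^{−x₂} − 1). Then the tracking error e(t) = (x₁(t), x₂(t) − w(t)) satisfies ė(t) = [[−1,−1],[1,0]]·e(t) − (0, c), and e(t) converges to (c, −c) as t → ∞; in particular the tracking error does not converge to zero. -/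
open Set Filter

noncomputable def gscμ : ℂ := ⟨-(1/2), Real.sqrt 3 / 2⟩

lemma gscμ_sq : gscμ ^ 2 + gscμ + 1 = 0 := by
  have h3 : Real.sqrt 3 ^ 2 = 3 := Real.sq_sqrt (by norm_num)
  simp only [Complex.ext_iff, pow_two, Complex.add_re, Complex.add_im, Complex.mul_re,
    Complex.mul_im, Complex.one_re, Complex.one_im, Complex.zero_re, Complex.zero_im, gscμ]
  constructor <;> nlinarith [h3]

lemma hdw_ofReal {f : ℝ → ℝ} {u t : ℝ} {s : Set ℝ} (hf : HasDerivWithinAt f u s t) :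
    HasDerivWithinAt (fun x => (f x : ℂ)) (u : ℂ) s t := by
  exact Complex.ofRealCLM.hasFDerivAt.comp_hasDerivWithinAt t hf

lemma exp_mul_hdw (μ : ℂ) (t : ℝ) (s : Set ℝ) :
    HasDerivWithinAt (fun x : ℝ => Complex.exp (μ * x)) (μ * Complex.exp (μ * t)) s t := by
  have h1 : HasDerivWithinAt (fun x : ℝ => μ * (x : ℂ)) μ s t := by
    simpa using (hdw_ofReal (hasDerivWithinAt_id t s)).const_mul μ
  have h2 := (Complex.hasDerivAt_exp (μ * t)).comp_hasDerivWithinAt t h1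
  rw [mul_comm (Complex.exp _) μ] at h2
  exact h2

/-- **GSC 2 has nonzero steady-state error for ramp references.** With `w(t) = w₀ + ct`
(`c ≠ 0`) and `(x₁, x₂)` solving the closed loop `ẋ₁ = -x₁ - x₂ + w(t)`, `ẋ₂ = x₁`
(the plant under the controller `u = x₁ + e^{-x₂} - 1`), the error
`e = (x₁, x₂ - w)` satisfies `ė = [[-1,-1],[1,0]]e - (0,c)` and converges to `(c, -c)`;
in particular it does not converge to zero. -/
theorem gsc2_ramp_reference_offset (c w₀ : ℝ) (hc : c ≠ 0) (x₁ x₂ : ℝ → ℝ)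
    (hx₁ : ∀ t ∈ Ici (0 : ℝ),
      HasDerivWithinAt x₁ (-(x₁ t) - x₂ t + (w₀ + c * t)) (Ici 0) t)
    (hx₂ : ∀ t ∈ Ici (0 : ℝ), HasDerivWithinAt x₂ (x₁ t) (Ici 0) t) :
    (∀ t ∈ Ici (0 : ℝ),
      HasDerivWithinAt x₁ (-(x₁ t) - (x₂ t - (w₀ + c * t))) (Ici 0) t ∧
      HasDerivWithinAt (fun τ => x₂ τ - (w₀ + c * τ)) (x₁ t - c) (Ici 0) t) ∧
    Tendsto (fun t => (x₁ t, x₂ t - (w₀ + c * t))) atTop (nhds (c, -c)) ∧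
    ¬ Tendsto (fun t => (x₁ t, x₂ t - (w₀ + c * t))) atTop (nhds ((0 : ℝ), (0 : ℝ))) := by
  have hw : ∀ t : ℝ, HasDerivWithinAt (fun τ : ℝ => w₀ + c * τ) c (Ici 0) t := fun t => by
    simpa using ((hasDerivWithinAt_id t (Ici 0)).const_mul c).const_add w₀
  set y₁ : ℝ → ℝ := fun t => x₁ t - c with hy₁def
  set y₂ : ℝ → ℝ := fun t => x₂ t - (w₀ + c * t) + c with hy₂def
  have hy₁ : ∀ t ∈ Ici (0:ℝ), HasDerivWithinAt y₁ (-(y₁ t) - y₂ t) (Ici 0) t := by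
    intro t ht
    have h := (hx₁ t ht).sub_const c
    convert h using 1
    · rfl
    · rfl
    simp only [hy₁def, hy₂def]; ring
  have hy₂ : ∀ t ∈ Ici (0:ℝ), HasDerivWithinAt y₂ (y₁ t) (Ici 0) t := by
    intro t ht
    have h := ((hx₂ t ht).sub (hw t)).add_const c
    convert h using 1
    · rfl
    · rfl
    · rfl
  set μ : ℂ := gscμ with hμdef
  have hμ : μ ^ 2 + μ + 1 = 0 := gscμ_sq
  set z : ℝ → ℂ := fun t => (y₁ t : ℂ) + (1 + μ) * (y₂ t : ℂ) with hzdef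
  have hz : ∀ t ∈ Ici (0:ℝ), HasDerivWithinAt z (μ * z t) (Ici 0) t := by
    intro t ht
    have h := (hdw_ofReal (hy₁ t ht)).add ((hdw_ofReal (hy₂ t ht)).const_mul (1 + μ))
    convert h using 1
    · rfl
    · rfl
    push_cast
    linear_combination (y₂ t : ℂ) * hμ
  set g : ℝ → ℂ := fun t => Complex.exp (-μ * t) * z t with hgdef
  have hg : ∀ t ∈ Ici (0:ℝ), HasDerivWithinAt g 0 (Ici 0) t := by
    intro t ht
    have h := (exp_mul_hdw (-μ) t (Ici 0)).mul (hz t ht)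
    convert h using 1
    · rfl
    · rfl
    ring
  have hgc : ∀ t ∈ Ici (0:ℝ), g t = g 0 := by
    intro t ht
    refine (convex_Ici (0:ℝ)).is_const_of_fderivWithin_eq_zero
      (fun x hx => ((hg x hx).differentiableWithinAt)) ?_ ht (self_mem_Ici)
    intro x hx
    have h0 : ContinuousLinearMap.toSpanSingleton ℝ (0 : ℂ) = 0 := by
      ext; simp
    have := (hg x hx).hasFDerivWithinAt
    rw [h0] at this
    exact this.fderivWithin (uniqueDiffOn_Ici 0 x hx)
  have hzval : ∀ t ∈ Ici (0:ℝ), z t = Complex.exp (μ * t) * z 0 := by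
    intro t ht
    have h := hgc t ht
    simp only [hgdef] at h
    have he : Complex.exp (-μ * (0:ℝ)) = 1 := by norm_num
    rw [he, one_mul] at h
    have hne : Complex.exp (-μ * t) ≠ 0 := Complex.exp_ne_zero _
    have : Complex.exp (μ * t) * (Complex.exp (-μ * t) * z t) = Complex.exp (μ * t) * z 0 := by
      rw [h]
    rwa [← mul_assoc, ← Complex.exp_add, show μ * (t:ℂ) + -μ * t = 0 by ring,
      Complex.exp_zero, one_mul] at this
  -- z tends to 0
  have hz0 : Tendsto z atTop (nhds 0) := by
    have hb : ∀ᶠ t in atTop, ‖z t‖ ≤ Real.exp (-(t / 2)) * ‖z 0‖ := by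
      filter_upwards [eventually_ge_atTop (0:ℝ)] with t ht
      rw [hzval t ht, norm_mul]
      have : ‖Complex.exp (μ * t)‖ = Real.exp (-(t / 2)) := by
        rw [Complex.norm_exp]
        congr 1
        simp [hμdef, gscμ, Complex.mul_re]
        ring
      rw [this]
    have hgl : Tendsto (fun t : ℝ => Real.exp (-(t / 2)) * ‖z 0‖) atTop (nhds 0) := by
      have h1 : Tendsto (fun t : ℝ => -(t / 2)) atTop atBot :=
        tendsto_neg_atTop_atBot.comp (tendsto_id.atTop_div_const two_pos)
      simpa using (Real.tendsto_exp_atBot.comp h1).mul_const ‖z 0‖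
    exact squeeze_zero_norm' hb hgl
  -- recover y₂ and y₁
  have him : ∀ t, y₂ t = (2 / Real.sqrt 3) * (z t).im := by
    intro t
    have h3 : Real.sqrt 3 ≠ 0 := by positivity
    simp only [hzdef, Complex.add_im, Complex.ofReal_im, Complex.mul_im, Complex.add_re,
      Complex.add_im, Complex.one_re, Complex.one_im, Complex.ofReal_re, hμdef, gscμ]
    field_simp
    ring
  have hre : ∀ t, y₁ t = (z t).re - (1 + μ.re) * y₂ t := by
    intro t
    simp only [hzdef, Complex.add_re, Complex.ofReal_re, Complex.mul_re, Complex.ofReal_im,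
      Complex.one_re, Complex.one_im]
    ring
  have hy₂0 : Tendsto y₂ atTop (nhds 0) := by
    have := ((Complex.continuous_im.tendsto 0).comp hz0).const_mul (2 / Real.sqrt 3)
    simp only [Complex.zero_im, mul_zero] at this
    simpa [← him] using this
  have hy₁0 : Tendsto y₁ atTop (nhds 0) := by
    have h1 := (Complex.continuous_re.tendsto 0).comp hz0
    simp only [Complex.zero_re] at h1
    have h2 := h1.sub (hy₂0.const_mul (1 + μ.re))
    simp only [mul_zero, sub_zero] at h2
    have heq : y₁ = fun t => (z t).re - (1 + μ.re) * y₂ t := funext hre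
    rw [heq]
    exact h2
  have hmain : Tendsto (fun t => (x₁ t, x₂ t - (w₀ + c * t))) atTop (nhds (c, -c)) := by
    have h1 : Tendsto x₁ atTop (nhds c) := by
      have := hy₁0.add_const c
      simpa [hy₁def] using this
    have h2 : Tendsto (fun t => x₂ t - (w₀ + c * t)) atTop (nhds (-c)) := by
      have := hy₂0.sub_const c
      simp only [zero_sub] at this
      simpa [hy₂def] using this
    exact h1.prodMk_nhds h2
  refine ⟨fun t ht => ⟨?_, (hx₂ t ht).sub (hw t)⟩, hmain, ?_⟩
  · convert hx₁ t ht using 1; ring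
  · intro h
    have := tendsto_nhds_unique h hmain
    rw [Prod.ext_iff] at this
    exact hc this.1.symm
end
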